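/- Let M be a von Neumann algebra and let ν, ρ be positive linear forms on M. Let R be a commutative weak-*-closed unital *-subalgebra of M containing the unit of M, and let a ∈ R with a ≥ 0 be such that ρ(y) = ν(a y a) for all y ∈ R. Assume R is minimizing for {ν, ρ}, i.e. inf { (1/2)·( ν(x) + ρ(x⁻¹) ) : x ∈ R positive and invertible in R } = inf { (1/2)·( ν(x) + ρ(x⁻¹) ) : x ∈ M positive and invertible in M }. Then for every orthoprojection p ∈ M (p = p* = p²) with ρ(1−p) = 0 one has ν(p a p) − ν((1−p) a (1−p)) = ν(a). -/

import Mathlib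

open scoped ComplexOrder
set_option maxHeartbeats 4000000

noncomputable section

variable {H : Type*} [NormedAddCommGroup H] [InnerProductSpace ℂ H] [CompleteSpace H]

/-- A von Neumann algebra is closed under scalar multiplication by complex numbers. -/
instance VonNeumannAlgebra.instSMulMemClass :
    SMulMemClass (VonNeumannAlgebra H) ℂ (H →L[ℂ] H) where
  smul_mem {s} c x hx := s.toStarSubalgebra.smul_mem hx c

private lemma isClosed_centralizer' {A : Type*} [NormedRing A] (s : Set A) :
    IsClosed (Set.centralizer s) := by
  have h : Set.centralizer s = ⋂ a ∈ s, {x : A | a * x = x * a} := by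
    ext x; rw [Set.mem_centralizer_iff]; simp
  rw [h]
  exact isClosed_biInter fun a _ =>
    isClosed_eq (continuous_const.mul continuous_id) (continuous_id.mul continuous_const)

/-- A von Neumann algebra is norm-closed in `B(H)`; consequently the subtype `↥M`
inherits a C*-algebra structure. -/
instance VonNeumannAlgebra.instIsClosed (M : VonNeumannAlgebra H) :
    IsClosed (M : Set (H →L[ℂ] H)) :=
  M.centralizer_centralizer ▸ isClosed_centralizer' _

variable {M : VonNeumannAlgebra H}

/-- `ν` is a positive linear form on the von Neumann algebra `M`:
a bounded linear functional with `ν(x*x) ≥ 0` for all `x`. -/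
def IsPosForm (ν : M →L[ℂ] ℂ) : Prop := ∀ x : M, 0 ≤ ν (star x * x)

/-- The set `Γ_M(ν,ρ) = { f ∈ M* : |f(y*x)|² ≤ ν(y*y)·ρ(x*x) for all x, y ∈ M }`. -/
def GammaSet (ν ρ : M →L[ℂ] ℂ) : Set (M →L[ℂ] ℂ) :=
  {f | ∀ x y : M, ‖f (star y * x)‖ ^ 2 ≤ (ν (star y * y)).re * (ρ (star x * x)).re}

/-- Let `R` be a commutative von Neumann subalgebra of `M` (with the same
unit), let `a ∈ R` be positive with `ρ(y) = ν(a y a)` for all `y ∈ R`, and suppose `R` is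
minimizing for `{ν,ρ}` (the infimum of `(1/2)(ν(x)+ρ(x⁻¹))` over positive elements of `R`
invertible in `R` equals the corresponding infimum over positive invertible elements of `M`).
Then for every orthoprojection `p ∈ M` with `ρ(1−p) = 0` one has
`ν(p a p) − ν((1−p) a (1−p)) = ν(a)`. -/

private lemma quarter : |(1:ℝ)/4| < 1/2 := by rw [abs_of_pos] <;> norm_num

private lemma quad_helper' {s b : ℝ} (h : ∀ t : ℝ, |t| < 1/2 → 0 ≤ t * s + t^2 * b) :
    s = 0 := by
  by_contra hs
  have hb : 0 ≤ b := by
    have h1 := h (1/4) quarter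
    have h2 := h (-(1/4)) (by rw [abs_neg]; exact quarter)
    nlinarith
  have hD : 0 < 2*|s| + 4*b + 1 := by have := abs_nonneg s; linarith
  set D := 2*|s| + 4*b + 1 with hDdef
  have ht : |(-s/D)| < 1/2 := by
    rw [abs_div, abs_neg, abs_of_pos hD, div_lt_iff₀ hD]
    have := abs_nonneg s
    nlinarith
  have hkey := h (-s/D) ht
  have hs2 : 0 < s^2 := by positivity
  have hval : (-s/D) * s + (-s/D)^2 * b = (s^2/D^2) * (b - D) := by
    field_simp; ring
  rw [hval] at hkey
  have hbD : b - D < 0 := by have := abs_nonneg s; simp only [hDdef]; linarith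
  nlinarith [mul_pos (div_pos hs2 (by positivity : (0:ℝ) < D^2)) (neg_pos.mpr hbD)]

variable {A : Type*} [Ring A] [StarRing A] [Algebra ℂ A] [StarModule ℂ A]

omit [StarModule ℂ A] in
private lemma posform_im {f : A →ₗ[ℂ] ℂ} (hf : ∀ x : A, 0 ≤ f (star x * x)) (x : A) :
    (f (star x * x)).im = 0 := by
  have := hf x; rw [Complex.le_def] at this; simpa using this.2.symm

omit [StarModule ℂ A] in
private lemma posform_re {f : A →ₗ[ℂ] ℂ} (hf : ∀ x : A, 0 ≤ f (star x * x)) (x : A) :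
    0 ≤ (f (star x * x)).re := by
  have := hf x; rw [Complex.le_def] at this; simpa using this.1

/-- positive linear functionals are hermitian -/
private lemma posform_conj {f : A →ₗ[ℂ] ℂ} (hf : ∀ x : A, 0 ≤ f (star x * x)) (z : A) :
    f (star z) = (starRingEnd ℂ) (f z) := by
  have him : ∀ x : A, (f (star x * x)).im = 0 := posform_im hf
  have him1 : (f 1).im = 0 := by simpa using him 1
  have himz : (f (star z * z)).im = 0 := him z
  have hx1 : star (1 + z) * (1 + z) = 1 + z + star z + star z * z := by
    simp only [star_add, star_one, add_mul, mul_add, one_mul, mul_one]; abel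
  have hx2 : star (1 + Complex.I • z) * (1 + Complex.I • z)
      = 1 + Complex.I • z - Complex.I • star z + star z * z := by
    simp only [star_add, star_one, star_smul, Complex.star_def, Complex.conj_I,
      add_mul, mul_add, one_mul, mul_one, smul_mul_assoc, mul_smul_comm, smul_smul,
      neg_smul, neg_mul, smul_add, smul_neg, Complex.I_mul_I, neg_neg, one_smul]
    simp only [sub_eq_add_neg]
    abel
  have e1 : (f z).im + (f (star z)).im = 0 := by
    have h := him (1 + z)
    rw [hx1, map_add, map_add, map_add] at h
    simp only [Complex.add_im, him1, himz] at h
    linarith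
  have e2 : (f z).re - (f (star z)).re = 0 := by
    have h := him (1 + Complex.I • z)
    rw [hx2, map_add, map_sub, map_add, map_smul, map_smul] at h
    simp only [Complex.add_im, Complex.sub_im, him1, himz, Complex.smul_im,
      Complex.real_smul, Complex.mul_im, Complex.I_re, Complex.I_im] at h
    -- h should reduce to an equation in re parts
    simp only [smul_eq_mul, Complex.mul_im, Complex.I_re, Complex.I_im] at h
    linarith
  apply Complex.ext <;> simp [Complex.conj_re, Complex.conj_im] <;> linarith

/-- Cauchy–Schwarz style kernel lemma -/
private lemma posform_kernel {f : A →ₗ[ℂ] ℂ} (hf : ∀ x : A, 0 ≤ f (star x * x))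
    {q : A} (hq : f (star q * q) = 0) (z : A) :
    f (star q * z) = 0 ∧ f (star z * q) = 0 := by
  set S := f (star q * z) with hS
  set T := f (star z * q) with hT
  have hexp : ∀ c : ℂ, f (star (q + c • z) * (q + c • z))
      = c * S + (starRingEnd ℂ) c * T + (c * (starRingEnd ℂ) c) * f (star z * z) := by
    intro c
    have : star (q + c • z) * (q + c • z)
        = star q * q + c • (star q * z) + (starRingEnd ℂ) c • (star z * q)
          + (c * (starRingEnd ℂ) c) • (star z * z) := by
      simp only [star_add, star_smul, Complex.star_def, add_mul, mul_add,
        smul_mul_assoc, mul_smul_comm, smul_smul, smul_add]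
      abel
    rw [this, map_add, map_add, map_add, map_smul, map_smul, map_smul, hq]
    simp only [smul_eq_mul, zero_add]
    rfl
  set B := f (star z * z) with hB
  have hBim : B.im = 0 := posform_im hf z
  have hBre : 0 ≤ B.re := posform_re hf z
  have key1 : ∀ t : ℝ, (0:ℂ) ≤ (t:ℂ) * (S + T) + ((t:ℂ)*(t:ℂ)) * B := by
    intro t
    have h0 := hf (q + (t:ℂ) • z)
    rw [hexp] at h0
    simpa [Complex.conj_ofReal, mul_add] using h0
  have key2 : ∀ t : ℝ, (0:ℂ) ≤ ((t:ℂ) * Complex.I) * (S - T) + ((t:ℂ)*(t:ℂ)) * B := by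
    intro t
    have h0 := hf (q + ((t:ℂ) * Complex.I) • z)
    rw [hexp] at h0
    have hc : (starRingEnd ℂ) ((t:ℂ) * Complex.I) = -((t:ℂ) * Complex.I) := by
      simp [Complex.conj_ofReal]
    rw [hc] at h0
    have hcc : (t:ℂ) * Complex.I * -((t:ℂ) * Complex.I) = (t:ℂ)*(t:ℂ) := by
      have := Complex.I_mul_I
      ring_nf
      rw [Complex.I_sq]
      ring
    rw [hcc] at h0
    convert h0 using 1
    ring
  have hu : S + T = 0 := by
    have him : (S + T).im = 0 := by
      have h0 := key1 1
      rw [Complex.le_def] at h0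
      have := h0.2
      simp only [Complex.zero_im, Complex.add_im, Complex.mul_im, Complex.ofReal_re,
        Complex.ofReal_im, hBim, Complex.ofReal_one, one_mul] at this ⊢
      linarith
    have hre : (S + T).re = 0 := by
      apply quad_helper' (b := B.re)
      intro t _
      have h0 := key1 t
      rw [Complex.le_def] at h0
      have := h0.1
      simp only [Complex.zero_re, Complex.add_re, Complex.mul_re, Complex.ofReal_re,
        Complex.ofReal_im, hBim, him] at this
      have h2 : (S + T).re = S.re + T.re := Complex.add_re S T
      rw [h2]
      nlinarith [this]
    exact Complex.ext hre him
  have hv : S - T = 0 := by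
    have hre : (S - T).re = 0 := by
      have h0 := key2 1
      rw [Complex.le_def] at h0
      have := h0.2
      simp only [Complex.zero_im, Complex.add_im, Complex.mul_im, Complex.mul_re,
        Complex.ofReal_re, Complex.ofReal_im, Complex.I_re, Complex.I_im, hBim,
        Complex.ofReal_one, Complex.one_re, Complex.one_im] at this
      linarith
    have him : (S - T).im = 0 := by
      have h := quad_helper' (s := -((S - T).im)) (b := B.re) ?_
      · linarith
      intro t _
      have h0 := key2 t
      rw [Complex.le_def] at h0
      have := h0.1
      simp only [Complex.zero_re, Complex.add_re, Complex.mul_re, Complex.mul_im,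
        Complex.ofReal_re, Complex.ofReal_im, Complex.I_re, Complex.I_im, hBim, hre] at this
      have h2 : (S - T).im = S.im - T.im := Complex.sub_im S T
      rw [h2] at this ⊢
      nlinarith [this]
    exact Complex.ext hre him
  constructor
  · linear_combination (hu + hv) / 2
  · linear_combination (hu - hv) / 2


private lemma exists_sqrt_unit (w : M) {ε : ℝ} (hε : 0 < ε) :
    (∃ v : M, star v * v = star w * w + algebraMap ℝ M ε ∧ star v = v) ∧
      IsUnit (star w * w + algebraMap ℝ M ε) := by
  set b : M := star w * w with hb
  set e : M := algebraMap ℝ M ε with he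
  have hbsa : IsSelfAdjoint b := IsSelfAdjoint.star_mul_self w
  have hesa : star e = e := by
    rw [he, IsScalarTower.algebraMap_apply ℝ ℂ M]
    simp [Algebra.algebraMap_eq_smul_one, star_smul, Complex.star_def, Complex.conj_ofReal]
  have hxsa : IsSelfAdjoint (b + e) := by
    rw [IsSelfAdjoint, star_add, hbsa.star_eq, hesa]
  have hspec : ∀ r ∈ spectrum ℝ (b + e), ε ≤ r := by
    intro r hr
    rw [spectrum.mem_iff] at hr
    have h2 : (r - ε) ∈ spectrum ℝ b := by
      rw [spectrum.mem_iff]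
      convert hr using 2
      rw [map_sub]
      abel
    have := spectrum_star_mul_self_nonneg (b := w) _ h2
    linarith
  have hunit : IsUnit (b + e) := by
    have h0 : (0:ℝ) ∉ spectrum ℝ (b + e) := fun h => by linarith [hspec 0 h]
    rw [spectrum.notMem_iff] at h0
    rw [map_zero, zero_sub] at h0
    simpa using h0.neg
  refine ⟨⟨cfc Real.sqrt (b + e), ?_, ?_⟩, hunit⟩
  · have hsa : IsSelfAdjoint (cfc Real.sqrt (b + e)) := cfc_predicate _ _
    rw [hsa.star_eq]
    rw [← cfc_mul Real.sqrt Real.sqrt (b + e) (Real.continuous_sqrt.continuousOn)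
      (Real.continuous_sqrt.continuousOn)]
    have : cfc (fun x => Real.sqrt x * Real.sqrt x) (b + e) = cfc (fun x : ℝ => x) (b + e) := by
      apply cfc_congr
      intro r hr
      exact Real.mul_self_sqrt (le_of_lt (lt_of_lt_of_le hε (hspec r hr)))
    rw [this, cfc_id' ℝ (b + e)]
  · exact (cfc_predicate _ _ : IsSelfAdjoint _).star_eq

private lemma inv_mem_R (R : VonNeumannAlgebra H) {x xi : M}
    (hx : (x : H →L[ℂ] H) ∈ R) (h1 : x * xi = 1) (h2 : xi * x = 1) :
    (xi : H →L[ℂ] H) ∈ R := by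
  haveI hcl : IsClosed ((R.toStarSubalgebra : Set (H →L[ℂ] H))) := R.instIsClosed
  have hc1 : (x : H →L[ℂ] H) * (xi : H →L[ℂ] H) = 1 := by exact_mod_cast congrArg Subtype.val h1
  have hc2 : (xi : H →L[ℂ] H) * (x : H →L[ℂ] H) = 1 := by exact_mod_cast congrArg Subtype.val h2
  have hxu : IsUnit (x : H →L[ℂ] H) := ⟨⟨_, _, hc1, hc2⟩, rfl⟩
  have hx' : IsUnit (⟨(x : H →L[ℂ] H), hx⟩ : R.toStarSubalgebra) :=
    R.toStarSubalgebra.coe_isUnit.mp hxu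
  obtain ⟨u, hu⟩ := hx'
  have huv : (x : H →L[ℂ] H) * ((u⁻¹ : Units R.toStarSubalgebra) : R.toStarSubalgebra) = 1 := by
    have h3 : (u : R.toStarSubalgebra) * ((u⁻¹ : Units R.toStarSubalgebra) : R.toStarSubalgebra) = 1 := u.mul_inv
    rw [hu] at h3
    have h4 := congrArg Subtype.val h3
    simpa using h4
  have hxiu : (xi : H →L[ℂ] H) = ((u⁻¹ : Units R.toStarSubalgebra) : R.toStarSubalgebra) :=
    left_inv_eq_right_inv hc2 huv
  rw [hxiu]
  exact SetLike.coe_mem _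

theorem minimizing_subalgebra_projection_identity
    (ν ρ : M →L[ℂ] ℂ) (hν : IsPosForm ν) (hρ : IsPosForm ρ)
    (R : VonNeumannAlgebra H) (hRM : ∀ x : H →L[ℂ] H, x ∈ R → x ∈ M)
    (hcomm : ∀ x y : H →L[ℂ] H, x ∈ R → y ∈ R → x * y = y * x)
    (a : M) (haR : (a : H →L[ℂ] H) ∈ R) (ha : ∃ w : M, a = star w * w)
    (hrad : ∀ y : M, (y : H →L[ℂ] H) ∈ R → ρ y = ν (a * y * a))
    (hmin :
      sInf {r : ℝ | ∃ x : M, (x : H →L[ℂ] H) ∈ R ∧ (∃ w : M, x = star w * w) ∧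
          ∃ xi : M, (xi : H →L[ℂ] H) ∈ R ∧ x * xi = 1 ∧ xi * x = 1 ∧
            r = (1/2) * ((ν x).re + (ρ xi).re)} =
      sInf {r : ℝ | ∃ x : M, (∃ w : M, x = star w * w) ∧ IsUnit x ∧
          r = (1/2) * ((ν x).re + (ρ (Ring.inverse x)).re)}) :
    ∀ p : M, IsSelfAdjoint p → p * p = p → ρ (1 - p) = 0 →
      ν (p * a * p) - ν ((1 - p) * a * (1 - p)) = ν a := by
  intro p hp hpp hrho1p
  obtain ⟨w, hw⟩ := ha
  have hν' : ∀ x : M, 0 ≤ (ν : M →ₗ[ℂ] ℂ) (star x * x) := fun x => hν x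
  have hρ' : ∀ x : M, 0 ≤ (ρ : M →ₗ[ℂ] ℂ) (star x * x) := fun x => hρ x
  set q : M := 1 - p with hqdef
  have hqsa : star q = q := by
    rw [hqdef, star_sub, star_one, hp.star_eq]
  have hq2 : q * q = q := by
    have h1 : (1 - p) * (1 - p) = 1 - p - p + p * p := by noncomm_ring
    rw [hqdef, h1, hpp]; abel
  have hasa : star a = a := by rw [hw, star_mul, star_star]
  -- kernel facts
  have hρq0 : (ρ : M →ₗ[ℂ] ℂ) (star q * q) = 0 := by
    rw [hqsa, hq2]; exact hrho1p
  have hkerL : ∀ z : M, ρ (q * z) = 0 := fun z => by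
    have h1 := (posform_kernel hρ' hρq0 z).1
    rwa [hqsa] at h1
  have hkerR : ∀ z : M, ρ (z * q) = 0 := fun z => by
    have h1 := (posform_kernel hρ' hρq0 (star z)).2
    rwa [star_star] at h1
  clear_value q
  -- constants
  set N : ℝ := (ν 1).re with hNdef
  set c' : ℝ := (ν q).re with hc'def
  set K : ℝ := (ν (q * (a * q))).re with hKdef
  set G : ℝ := (ν (q * a) + ν (a * q)).re with hGdef
  have hN : 0 ≤ N := by
    have h1 := posform_re hν' 1; simpa using h1
  have hc' : 0 ≤ c' := by
    have h1 := posform_re hν' q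
    rwa [hqsa, hq2] at h1
  have hK : 0 ≤ K := by
    have h1 := posform_re hν' (w * q)
    have h2 : star (w * q) * (w * q) = q * (a * q) := by
      rw [star_mul, hqsa, hw]; noncomm_ring
    rwa [h2] at h1
  -- the two sets
  set SA := {r : ℝ | ∃ x : M, (x : H →L[ℂ] H) ∈ R ∧ (∃ w : M, x = star w * w) ∧
      ∃ xi : M, (xi : H →L[ℂ] H) ∈ R ∧ x * xi = 1 ∧ xi * x = 1 ∧
        r = (1/2) * ((ν x).re + (ρ xi).re)} with hSAdef
  set SB := {r : ℝ | ∃ x : M, (∃ w : M, x = star w * w) ∧ IsUnit x ∧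
      r = (1/2) * ((ν x).re + (ρ (Ring.inverse x)).re)} with hSBdef
  have hmin' : sInf SA = sInf SB := hmin
  -- selfadjointness and positivity witness for inverses
  have inv_wit : ∀ x xi w' : M, x = star w' * w' → x * xi = 1 → xi * x = 1 →
      star xi = xi ∧ xi = star (w' * xi) * (w' * xi) := by
    intro x xi w' hw' h1 h2
    have hxsa : star x = x := by rw [hw', star_mul, star_star]
    have h3 : star xi * x = 1 := by
      have h4 := congrArg star h1
      rwa [star_mul, hxsa, star_one] at h4
    have hxisa : star xi = xi := by
      calc star xi = star xi * (x * xi) := by rw [h1, mul_one]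
        _ = (star xi * x) * xi := by rw [mul_assoc]
        _ = xi := by rw [h3, one_mul]
    refine ⟨hxisa, ?_⟩
    have h5 : xi * x * xi = xi := by rw [h2, one_mul]
    calc xi = xi * x * xi := h5.symm
      _ = xi * (star w' * w') * xi := by rw [← hw']
      _ = star (w' * xi) * (w' * xi) := by rw [star_mul, hxisa]; noncomm_ring
  -- lower bound for SA
  have hAlb : ∀ r ∈ SA, (ν a).re ≤ r := by
    rintro r ⟨x, hxR, ⟨w', hw'⟩, xi, hxiR, hxxi, hxix, rfl⟩
    obtain ⟨hxisa, hxiwit⟩ := inv_wit x xi w' hw' hxxi hxix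
    have hρxi : ρ xi = ν (a * xi * a) := hrad xi hxiR
    have hxsa : star x = x := by rw [hw', star_mul, star_star]
    -- (x-a) * xi * (x-a) = x - a - a + a*xi*a
    have e2 : (x - a) * xi * (x - a) = x - a - a + a * xi * a := by
      have h1 : (x - a) * xi * (x - a)
          = x * xi * x - x * xi * a - a * xi * x + a * xi * a := by noncomm_ring
      have h2 : x * xi * x = x := by rw [hxxi, one_mul]
      have h3 : x * xi * a = a := by rw [hxxi, one_mul]
      have h4 : a * xi * x = a := by rw [mul_assoc, hxix, mul_one]
      rw [h1, h2, h3, h4]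
    have e3 : (x - a) * xi * (x - a)
        = star ((w' * xi) * (x - a)) * ((w' * xi) * (x - a)) := by
      have hsa2 : star (x - a) = x - a := by rw [star_sub, hxsa, hasa]
      rw [star_mul, hsa2]
      calc (x - a) * xi * (x - a)
          = (x - a) * (star (w' * xi) * (w' * xi)) * (x - a) := by rw [← hxiwit]
        _ = (x - a) * star (w' * xi) * ((w' * xi) * (x - a)) := by noncomm_ring
    have hposre : 0 ≤ (ν ((x - a) * xi * (x - a))).re := by
      rw [e3]; exact posform_re hν' _
    have hsum : (ν x).re + (ν (a * xi * a)).re = 2 * (ν a).re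
        + (ν ((x - a) * xi * (x - a))).re := by
      rw [e2]
      have : ν (x - a - a + a * xi * a)
          = ν x - ν a - ν a + ν (a * xi * a) := by
        rw [map_add, map_sub, map_sub]
      rw [this]
      simp only [Complex.add_re, Complex.sub_re]
      ring
    rw [hρxi]
    nlinarith [hposre, hsum]
  have hAne : SA.Nonempty := by
    refine ⟨(1/2) * ((ν 1).re + (ρ 1).re), 1, ?_, ⟨1, by simp⟩, 1, ?_, by simp, by simp, rfl⟩
    · rw [OneMemClass.coe_one]; exact one_mem R
    · rw [OneMemClass.coe_one]; exact one_mem R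
  have h1 : (ν a).re ≤ sInf SA := le_csInf hAne hAlb
  -- SB is bounded below by 0
  have hBbdd : BddBelow SB := by
    refine ⟨0, ?_⟩
    rintro r ⟨x, ⟨w', hw'⟩, hxu, rfl⟩
    have hx1 : x * Ring.inverse x = 1 := Ring.mul_inverse_cancel x hxu
    have hx2 : Ring.inverse x * x = 1 := Ring.inverse_mul_cancel x hxu
    obtain ⟨-, hwit⟩ := inv_wit x (Ring.inverse x) w' hw' hx1 hx2
    have hr1 : 0 ≤ (ν x).re := by rw [hw']; exact posform_re hν' _
    have hr2 : 0 ≤ (ρ (Ring.inverse x)).re := by rw [hwit]; exact posform_re hρ' _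
    positivity
  -- MASTER INEQUALITY
  have master : ∀ ε : ℝ, 0 < ε → ∀ t : ℝ, |t| < 1/2 →
      0 ≤ ε*N + t*(G + 2*ε*c') + t^2*(K + ε*c') := by
    intro ε hε t ht
    obtain ⟨⟨v, hv, hvsa⟩, hxeu⟩ := exists_sqrt_unit (M := M) w hε
    rw [← hw] at hv hxeu
    set e : M := algebraMap ℝ M ε with he
    set xe : M := a + e with hxe
    have he1 : e = (ε:ℂ) • (1:M) := by
      rw [he, IsScalarTower.algebraMap_apply ℝ ℂ M]
      simp [Algebra.algebraMap_eq_smul_one]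
    have hesa : star e = e := by
      rw [he1, star_smul, star_one, Complex.star_def, Complex.conj_ofReal]
    have hxesa : star xe = xe := by rw [hxe, star_add, hasa, hesa]
    clear_value e xe
    set xi : M := ((hxeu.unit⁻¹ : Units M) : M) with hxidef
    have hx1 : xe * xi = 1 := hxeu.mul_val_inv
    have hx2 : xi * xe = 1 := hxeu.val_inv_mul
    have hxisa : star xi = xi := by
      have h3 : star xi * xe = 1 := by
        have h4 := congrArg star hx1
        rwa [star_mul, hxesa, star_one] at h4
      calc star xi = star xi * (xe * xi) := by rw [hx1, mul_one]
        _ = (star xi * xe) * xi := by rw [mul_assoc]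
        _ = xi := by rw [h3, one_mul]
    -- membership of xe and xi in R
    have hxeR : ((xe : M) : H →L[ℂ] H) ∈ R := by
      have hco : ((xe : M) : H →L[ℂ] H)
          = (a : H →L[ℂ] H) + (ε:ℂ) • ((1 : M) : H →L[ℂ] H) := by
        rw [hxe, he1]; rfl
      rw [hco, OneMemClass.coe_one]
      exact add_mem haR (SMulMemClass.smul_mem _ (one_mem R))
    have hxiR : ((xi : M) : H →L[ℂ] H) ∈ R := inv_mem_R R hxeR hx1 hx2
    have hρxi : ρ xi = ν (a * xi * a) := hrad xi hxiR
    -- scalar commutation facts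
    have hemulL : ∀ u : M, e * u = (ε:ℂ) • u := fun u => by
      rw [he1, smul_mul_assoc, one_mul]
    have hemulR : ∀ u : M, u * e = (ε:ℂ) • u := fun u => by
      rw [he1, mul_smul_comm, mul_one]
    -- identity: ν xe + ν (a*xi*a) = 2 ν a + ε² ν xi
    have hsumid : (ν xe).re + (ρ xi).re = 2*(ν a).re + (ε*ε) * (ν xi).re := by
      have hax : a * xi * a = xe - e - e + ((ε:ℂ)*(ε:ℂ)) • xi := by
        have ha' : a = xe - e := by rw [hxe]; abel
        have step : (xe - e) * xi * (xe - e)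
            = xe * (xi * xe) - xe * (xi * e) - (e * (xi * xe) - e * (xi * e)) := by
          noncomm_ring
        calc a * xi * a = (xe - e) * xi * (xe - e) := by rw [← ha']
          _ = xe * (xi * xe) - xe * (xi * e) - (e * (xi * xe) - e * (xi * e)) := step
          _ = xe - e - e + ((ε:ℂ)*(ε:ℂ)) • xi := by
              have k1 : xe * (xi * e) = e := by
                rw [hemulR xi, mul_smul_comm, hx1, ← he1]
              have k2 : e * (xi * e) = ((ε:ℂ)*(ε:ℂ)) • xi := by
                rw [hemulR xi, mul_smul_comm, hemulL xi, smul_smul]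
              rw [hx2, mul_one, mul_one, k1, k2]
              abel
      rw [hρxi, hax]
      have hνe : ν e = (ε:ℂ) * ν 1 := by rw [he1, map_smul, smul_eq_mul]
      have hνxe : ν xe = ν a + (ε:ℂ) * ν 1 := by rw [hxe, map_add, hνe]
      rw [map_add, map_sub, map_sub, map_smul, hνxe, hνe, smul_eq_mul]
      simp only [← Complex.ofReal_pow, ← Complex.ofReal_mul, Complex.add_re,
        Complex.sub_re, Complex.re_ofReal_mul, Complex.ofReal_re, Complex.ofReal_im]
      ring
    -- bound: ε * (ν xi).re ≤ N
    have hb1 : ε * (ν xi).re ≤ N := by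
      have hxia : xi * a = 1 - (ε:ℂ) • xi := by
        have ha' : a = xe - e := by rw [hxe]; abel
        rw [ha', mul_sub, hx2, hemulR xi]
      have hwit : xi * a = star (a * xi) * (a * xi) + (ε:ℂ) • (star (w * xi) * (w * xi)) := by
        have t1 : star (a * xi) * (a * xi) = xi * (a * (a * xi)) := by
          rw [star_mul, hasa, hxisa, mul_assoc]
        have t2 : star (w * xi) * (w * xi) = xi * (a * xi) := by
          rw [star_mul, hxisa, hw]; noncomm_ring
        have t3 : xi * a = xi * (a * (a * xi)) + (ε:ℂ) • (xi * (a * xi)) := by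
          calc xi * a = (xi * a) * (xe * xi) := by rw [hx1, mul_one]
            _ = (xi * a) * (a * xi + (ε:ℂ) • xi) := by
                rw [hxe, add_mul, hemulL xi]
            _ = xi * (a * (a * xi)) + (ε:ℂ) • (xi * (a * xi)) := by
                rw [mul_add, mul_smul_comm]
                simp only [mul_assoc]
        rw [t1, t2, t3]
      have h7 : 0 ≤ (ν (xi * a)).re := by
        rw [hwit, map_add, map_smul]
        have r1 := posform_re hν' (a * xi)
        have r2 := posform_re hν' (w * xi)
        simp only [Complex.add_re, smul_eq_mul, Complex.re_ofReal_mul]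
        exact add_nonneg r1 (mul_nonneg hε.le r2)
      rw [hxia, map_sub, map_smul] at h7
      simp only [map_one, Complex.sub_re, smul_eq_mul, Complex.re_ofReal_mul] at h7
      rw [hNdef]
      linarith [h7]
    -- the perturbation
    set s' : ℝ := -t / (1 + t) with hs'
    have h1t : (0:ℝ) < 1 + t := by
      have := (abs_lt.mp ht).1; linarith
    have hts : t + s' + t * s' = 0 := by
      rw [hs']; field_simp; ring
    set y : M := 1 + (t:ℂ) • q with hy
    set z : M := 1 + (s':ℂ) • q with hz
    have hyz : ∀ u1 u2 : ℝ, u1 + u2 + u1 * u2 = 0 →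
        (1 + (u1:ℂ) • q) * (1 + (u2:ℂ) • q) = 1 := by
      intro u1 u2 hu
      have expand : (1 + (u1:ℂ) • q) * (1 + (u2:ℂ) • q)
          = 1 + ((u1:ℂ) + (u2:ℂ) + (u1:ℂ)*(u2:ℂ)) • q := by
        have e1 : (1 + (u1:ℂ) • q) * (1 + (u2:ℂ) • q)
            = 1 + (u2:ℂ) • q + (u1:ℂ) • q + ((u1:ℂ)*(u2:ℂ)) • (q * q) := by
          simp only [add_mul, mul_add, one_mul, mul_one, smul_mul_assoc,
            mul_smul_comm, smul_smul, smul_add]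
          module
        rw [e1, hq2, add_smul, add_smul]
        abel
      rw [expand]
      have : ((u1:ℂ) + (u2:ℂ) + (u1:ℂ)*(u2:ℂ)) = ((u1 + u2 + u1*u2 : ℝ) : ℂ) := by
        push_cast; ring
      rw [this, hu]
      simp
    have hyz1 : y * z = 1 := by rw [hy, hz]; exact hyz t s' hts
    have hzy1 : z * y = 1 := by
      rw [hy, hz]; exact hyz s' t (by linarith [hts] )
    have hysa : star y = y := by
      rw [hy, star_add, star_one, star_smul, Complex.star_def, Complex.conj_ofReal, hqsa]
    clear_value y z
    set X : M := y * (xe * y) with hX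
    set Xi : M := z * (xi * z) with hXi
    clear_value X Xi
    have hXw : X = star (v * y) * (v * y) := by
      rw [star_mul, hysa, hX]
      calc y * (xe * y) = y * ((star v * v) * y) := by rw [hv]
        _ = (y * star v) * (v * y) := by noncomm_ring
    have hXXi : X * Xi = 1 := by
      have a1 : X * Xi = y * (xe * ((y * z) * (xi * z))) := by
        rw [hX, hXi]; simp only [mul_assoc]
      rw [a1, hyz1, one_mul, ← mul_assoc xe xi z, hx1, one_mul, hyz1]
    have hXiX : Xi * X = 1 := by
      have a1 : Xi * X = z * (xi * ((z * y) * (xe * y))) := by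
        rw [hX, hXi]; simp only [mul_assoc]
      rw [a1, hzy1, one_mul, ← mul_assoc xi xe y, hx2, one_mul, hzy1]
    set U : Mˣ := ⟨X, Xi, hXXi, hXiX⟩ with hU
    have hRinv : Ring.inverse X = Xi := by
      rw [show X = ((U : Mˣ) : M) from rfl, Ring.inverse_unit]
      rfl
    have hmem : ((1:ℝ)/2) * ((ν X).re + (ρ (Ring.inverse X)).re) ∈ SB :=
      ⟨X, ⟨v * y, hXw⟩, ⟨U, rfl⟩, rfl⟩
    have hle : (ν a).re ≤ (1/2) * ((ν X).re + (ρ (Ring.inverse X)).re) := by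
      calc (ν a).re ≤ sInf SA := h1
        _ = sInf SB := hmin'
        _ ≤ _ := csInf_le hBbdd hmem
    -- expansions
    have hρX : ρ (Ring.inverse X) = ρ xi := by
      rw [hRinv]
      have hXiexp : Xi = xi + (s':ℂ) • (xi * q) + (s':ℂ) • (q * xi)
          + ((s':ℂ)*(s':ℂ)) • (q * (xi * q)) := by
        rw [hXi, hz]
        simp only [add_mul, mul_add, one_mul, mul_one, smul_mul_assoc,
          mul_smul_comm, smul_smul, mul_assoc, smul_add]
        module
      rw [hXiexp, map_add, map_add, map_add, map_smul, map_smul, map_smul]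
      rw [hkerR xi, hkerL xi, hkerL (xi * q)]
      simp
    have hXexp : X = xe + (t:ℂ) • (xe * q) + (t:ℂ) • (q * xe)
        + ((t:ℂ)*(t:ℂ)) • (q * (xe * q)) := by
      rw [hX, hy]
      simp only [add_mul, mul_add, one_mul, mul_one, smul_mul_assoc,
        mul_smul_comm, smul_smul, mul_assoc, smul_add]
      module
    have hνX : (ν X).re = (ν xe).re + t * ((ν (xe * q)).re + (ν (q * xe)).re)
        + (t*t) * (ν (q * (xe * q))).re := by
      rw [hXexp, map_add, map_add, map_add, map_smul, map_smul, map_smul]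
      simp only [smul_eq_mul, ← Complex.ofReal_mul, Complex.add_re, Complex.re_ofReal_mul]
      ring
    -- decompositions of the q-terms
    have hqxe : (ν (q * xe)).re = (ν (q * a)).re + ε * c' := by
      have : q * xe = q * a + (ε:ℂ) • q := by
        rw [hxe, mul_add, hemulR q]
      rw [this, map_add, map_smul]
      simp only [Complex.add_re, smul_eq_mul, Complex.re_ofReal_mul, hc'def]
    have hxeq : (ν (xe * q)).re = (ν (a * q)).re + ε * c' := by
      have : xe * q = a * q + (ε:ℂ) • q := by
        rw [hxe, add_mul, hemulL q]
      rw [this, map_add, map_smul]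
      simp only [Complex.add_re, smul_eq_mul, Complex.re_ofReal_mul, hc'def]
    have hqxeq : (ν (q * (xe * q))).re = K + ε * c' := by
      have : q * (xe * q) = q * (a * q) + (ε:ℂ) • q := by
        rw [hxe, add_mul, hemulL q, mul_add, mul_smul_comm, hq2]
      rw [this, map_add, map_smul]
      simp only [Complex.add_re, smul_eq_mul, Complex.re_ofReal_mul, hKdef, hc'def]
    have hGsplit : G = (ν (q * a)).re + (ν (a * q)).re := by
      rw [hGdef, Complex.add_re]
    -- assemble
    have hfinal : (1/2) * ((ν X).re + (ρ (Ring.inverse X)).re)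
        = (ν a).re + (1/2) * ((ε*ε) * (ν xi).re)
          + (t/2) * (G + 2*ε*c') + (t*t/2) * (K + ε*c') := by
      rw [hρX, hνX, hqxe, hxeq, hqxeq, hGsplit]
      linear_combination (1/2 : ℝ) * hsumid
    have hb2 : (ε*ε) * (ν xi).re ≤ ε * N := by
      have := mul_le_mul_of_nonneg_left hb1 hε.le
      nlinarith [this]
    rw [hfinal] at hle
    nlinarith [hle, hb2]
  -- deduce G = 0
  have claim : ∀ t : ℝ, |t| < 1/2 → 0 ≤ t * G + t^2 * (N + K + 3*c') := by
    intro t ht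
    rcases eq_or_ne t 0 with rfl | htne
    · simp
    have hε : 0 < t^2 := by positivity
    have hm := master (t^2) hε t ht
    have habs := abs_lt.mp ht
    have h3 : 0 ≤ 3 - 2*t - t^2 := by nlinarith [habs.1, habs.2]
    have hfac : 0 ≤ t^2 * c' * (3 - 2*t - t^2) :=
      mul_nonneg (mul_nonneg (sq_nonneg t) hc') h3
    nlinarith [hm, hfac]
  have hG : G = 0 := quad_helper' claim
  -- imaginary part via hermitian symmetry
  have hherm : ν (a * q) = (starRingEnd ℂ) (ν (q * a)) := by
    have h2 := posform_conj hν' (q * a)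
    rwa [star_mul, hasa, hqsa] at h2
  have hsum0 : ν (q * a) + ν (a * q) = 0 := by
    apply Complex.ext
    · exact hG
    · rw [Complex.add_im, hherm]
      simp
  -- conclusion
  have hfin : p * a * p - (1 - p) * a * (1 - p) = a - (q * a + a * q) := by
    rw [hqdef]; noncomm_ring
  rw [hqdef]
  calc ν (p * a * p) - ν ((1 - p) * a * (1 - p))
      = ν (p * a * p - (1 - p) * a * (1 - p)) := (map_sub ν _ _).symm
    _ = ν (a - (q * a + a * q)) := by rw [hfin]
    _ = ν a - (ν (q * a) + ν (a * q)) := by rw [map_sub, map_add]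
    _ = ν a := by rw [hsum0, sub_zero]
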